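/- Let k ≥ 1 and fix n, y : Fin k → ℕ. Suppose u ∈ U(n,y), j < j' are flexibility levels with u j ≥ 1 and u j' ≤ n j' − 1. Define û by û j = u j − 1, û j' = u j' + 1, û l = u l otherwise. Then û ∈ U(n,y). -/
import Mathlib


/-- Transferring one unit of service from a less flexible level `j` to a more
flexible level `j' > j` preserves feasibility of the service vector. -/
theorem stmt16 (k : ℕ) (hk : 1 ≤ k) (n y u : Fin k → ℕ)
    (hu1 : ∀ m : Fin k, u m ≤ n m)
    (hu2 : ∀ m : Fin k, (∑ l ∈ Finset.Iic m, u l) ≤ (∑ l ∈ Finset.Iic m, y l))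
    (j j' : Fin k) (hjj : j < j') (hj : 1 ≤ u j) (hj' : u j' + 1 ≤ n j') :
    (∀ m : Fin k,
      (if m = j then u m - 1 else if m = j' then u m + 1 else u m) ≤ n m) ∧
    (∀ m : Fin k,
      (∑ l ∈ Finset.Iic m, (if l = j then u l - 1 else if l = j' then u l + 1 else u l))
        ≤ (∑ l ∈ Finset.Iic m, y l)) := by
  have hne : j ≠ j' := ne_of_lt hjj
  constructor
  · intro m
    by_cases h1 : m = j
    · subst h1; simp only [if_pos rfl]
      exact le_trans (Nat.sub_le _ _) (hu1 m)
    · by_cases h2 : m = j'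
      · subst h2; simp [h1, hj']
      · simp [h1, h2, hu1 m]
  · intro m
    refine le_trans ?_ (hu2 m)
    set v : Fin k → ℕ := fun l => if l = j then u l - 1 else if l = j' then u l + 1 else u l
      with hv
    have key : (Finset.Iic m).sum v + (if j ∈ Finset.Iic m then 1 else 0)
        = (∑ l ∈ Finset.Iic m, u l) + (if j' ∈ Finset.Iic m then 1 else 0) := by
      rw [← Finset.sum_ite_eq' (Finset.Iic m) j (fun _ => 1),
          ← Finset.sum_ite_eq' (Finset.Iic m) j' (fun _ => 1),
          ← Finset.sum_add_distrib, ← Finset.sum_add_distrib]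
      apply Finset.sum_congr rfl
      intro l _
      by_cases h1 : l = j
      · subst h1; simp [hv, hne, Nat.sub_add_cancel hj]
      · by_cases h2 : l = j'
        · subst h2; simp [hv, h1]
        · simp [hv, h1, h2]
    by_cases hjm : j' ∈ Finset.Iic m
    · have hjm' : j ∈ Finset.Iic m := by
        simp only [Finset.mem_Iic] at *
        exact le_trans hjj.le hjm
      rw [if_pos hjm, if_pos hjm'] at key
      omega
    · rw [if_neg hjm] at key
      omega
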